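/- arXiv:1806.06028 — 3 statements merged into one kernel-verified Lean document; each statement's English description precedes it below -/
import Mathlib

section
/- If X is a random variable with the Gamma(k, λ) distribution (k, λ > 0), then for every t > 0, E[(-(k-1)/X + 1/λ) · 1{X > t}] = p(t, k, λ), where p(·, k, λ) is the Gamma(k, λ) density. In particular this expectation is nonnegative. -/
open MeasureTheory Real Filter Set Topology

noncomputable def gammaPdf (k l x : ℝ) : ℝ :=
  l ^ (-k) * x ^ (k - 1) * Real.exp (-x / l) / Real.Gamma k

noncomputable def digamma (x : ℝ) : ℝ := deriv Real.Gamma x / Real.Gamma x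

lemma gammaPdf_nonneg {k l : ℝ} (hk : 0 < k) (hl : 0 < l) (x : ℝ) (hx : 0 ≤ x) :
    0 ≤ gammaPdf k l x := by
  unfold gammaPdf
  have h1 : (0:ℝ) ≤ l ^ (-k) := (Real.rpow_pos_of_pos hl _).le
  have h2 : (0:ℝ) ≤ x ^ (k - 1) := Real.rpow_nonneg hx _
  have h3 : (0:ℝ) < Real.Gamma k := Real.Gamma_pos_of_pos hk
  positivity

lemma gammaPdf_hasDerivAt {k l : ℝ} (hk : 0 < k) (hl : 0 < l) {x : ℝ} (hx : 0 < x) :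
    HasDerivAt (gammaPdf k l) (gammaPdf k l x * ((k - 1) / x - 1 / l)) x := by
  have h1 : HasDerivAt (fun y : ℝ => y ^ (k - 1)) ((k - 1) * x ^ (k - 1 - 1)) x :=
    Real.hasDerivAt_rpow_const (Or.inl hx.ne')
  have h2 : HasDerivAt (fun y : ℝ => Real.exp (-y / l)) (Real.exp (-x / l) * (-1 / l)) x := by
    have : HasDerivAt (fun y : ℝ => -y / l) (-1 / l) x := ((hasDerivAt_id x).neg.div_const l)
    simpa [mul_comm] using this.exp
  have h3 := ((h1.mul h2).const_mul (l ^ (-k) / Real.Gamma k))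
  have hfe : (fun y : ℝ => l ^ (-k) / Real.Gamma k * (y ^ (k - 1) * Real.exp (-y / l))) =
      gammaPdf k l := by
    funext y; unfold gammaPdf; ring
  simp only [Pi.mul_apply] at h3
  rw [hfe] at h3
  refine h3.congr_deriv ?_
  symm
  unfold gammaPdf
  rw [show x ^ (k - 1 - 1) = x ^ (k - 1) / x from Real.rpow_sub_one hx.ne' (k - 1)]
  have hG : Real.Gamma k ≠ 0 := (Real.Gamma_pos_of_pos hk).ne'
  field_simp
  ring

lemma gammaPdf_tendsto_zero {k l : ℝ} (hl : 0 < l) :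
    Tendsto (gammaPdf k l) atTop (𝓝 0) := by
  have h := (tendsto_rpow_mul_exp_neg_mul_atTop_nhds_zero (k - 1) (1 / l) (by positivity)).const_mul
    (l ^ (-k) / Real.Gamma k)
  rw [mul_zero] at h
  refine h.congr fun x => ?_
  unfold gammaPdf
  rw [show -(1 / l) * x = -x / l by ring]
  ring

theorem gamma_indicator_expectation {Ω : Type*} [MeasurableSpace Ω] (P : Measure Ω)
    [IsProbabilityMeasure P] (X : Ω → ℝ) (hX : Measurable X)
    (k l : ℝ) (hk : 0 < k) (hl : 0 < l)
    (hlaw : Measure.map X P =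
      MeasureTheory.volume.withDensity (fun x => ENNReal.ofReal (if 0 < x then gammaPdf k l x else 0)))
    (t : ℝ) (ht : 0 < t) :
    (∫ ω, (if t < X ω then -(k - 1) / X ω + 1 / l else 0) ∂P) = gammaPdf k l t ∧
    0 ≤ ∫ ω, (if t < X ω then -(k - 1) / X ω + 1 / l else 0) ∂P := by
  set F : ℝ → ℝ := fun x => if t < x then -(k - 1) / x + 1 / l else 0 with hF
  set g : ℝ → ℝ := fun x => if 0 < x then gammaPdf k l x else 0 with hg
  have hg_nonneg : ∀ x, 0 ≤ g x := by
    intro x; simp only [hg]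
    split_ifs with h
    · exact gammaPdf_nonneg hk hl x h.le
    · exact le_rfl
  have hgmeas : Measurable g := by
    apply Measurable.ite measurableSet_Ioi _ measurable_const
    unfold gammaPdf
    fun_prop
  have hFmeas : Measurable F := by
    apply Measurable.ite measurableSet_Ioi _ measurable_const
    exact (measurable_const.div measurable_id).add measurable_const
  -- the derivative of gammaPdf
  set f' : ℝ → ℝ := fun x => gammaPdf k l x * ((k - 1) / x - 1 / l) with hf'
  have hf'int : IntegrableOn f' (Ioi t) := by
    refine integrable_of_isBigO_exp_neg (b := 1 / (2 * l)) (by positivity) ?_ ?_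
    · intro x hx
      have hx0 : 0 < x := lt_of_lt_of_le ht hx
      apply ContinuousAt.continuousWithinAt
      have hc : ContinuousAt (gammaPdf k l) x := by
        unfold gammaPdf
        exact ((continuousAt_const.mul
          (Real.continuousAt_rpow_const x (k-1) (Or.inl hx0.ne'))).mul
          ((Real.continuous_exp.comp ((continuous_neg.div_const l))).continuousAt)).div_const _
      exact hc.mul ((continuousAt_const.div continuousAt_id hx0.ne').sub continuousAt_const)
    · apply Asymptotics.IsLittleO.isBigO
      apply Asymptotics.isLittleO_of_tendsto (fun x h => absurd h (Real.exp_ne_zero _))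
      have key : ∀ x : ℝ, f' x / Real.exp (-(1 / (2 * l)) * x) =
          (l ^ (-k) / Real.Gamma k * (x ^ (k - 1) * Real.exp (-(1 / (2 * l)) * x))) *
            ((k - 1) / x - 1 / l) := by
        intro x
        have hsplit : Real.exp (-x / l) =
            Real.exp (-(1 / (2 * l)) * x) * Real.exp (-(1 / (2 * l)) * x) := by
          rw [← Real.exp_add]; congr 1; field_simp; ring
        simp only [hf']
        unfold gammaPdf
        rw [hsplit]
        field_simp
      simp only [key]
      have h1 := (tendsto_rpow_mul_exp_neg_mul_atTop_nhds_zero (k - 1) (1 / (2 * l))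
        (by positivity)).const_mul (l ^ (-k) / Real.Gamma k)
      have h2 : Tendsto (fun x : ℝ => (k - 1) / x - 1 / l) atTop (𝓝 (0 - 1 / l)) := by
        exact (tendsto_const_nhds.div_atTop tendsto_id).sub tendsto_const_nhds
      have := h1.mul h2
      simpa using this
  have hderiv : ∀ x ∈ Ici t, HasDerivAt (gammaPdf k l) (f' x) x := fun x hx =>
    gammaPdf_hasDerivAt hk hl (lt_of_lt_of_le ht hx)
  have hFTC : ∫ x in Ioi t, f' x = 0 - gammaPdf k l t :=
    integral_Ioi_of_hasDerivAt_of_tendsto' hderiv hf'int (gammaPdf_tendsto_zero hl)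
  -- main computation
  have hmain : (∫ ω, F (X ω) ∂P) = gammaPdf k l t := by
    rw [← integral_map hX.aemeasurable hFmeas.aestronglyMeasurable, hlaw]
    have : (fun x => ENNReal.ofReal (g x)) = fun x => ((Real.toNNReal (g x) : NNReal) : ENNReal) :=
      rfl
    rw [this, integral_withDensity_eq_integral_smul hgmeas.real_toNNReal]
    have heq : ∀ x : ℝ, (Real.toNNReal (g x)) • F x = Set.indicator (Ioi t) (fun x => -f' x) x := by
      intro x
      rw [NNReal.smul_def, smul_eq_mul, Real.coe_toNNReal _ (hg_nonneg x)]
      by_cases hx : t < x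
      · have hx0 : 0 < x := ht.trans hx
        simp only [Set.indicator_apply, mem_Ioi, if_pos hx]
        simp only [hg, hF, hf', if_pos hx0, if_pos hx]
        ring
      · simp only [Set.indicator_apply, mem_Ioi, if_neg hx]
        simp [hF, hx]
    simp only [heq]
    rw [integral_indicator measurableSet_Ioi, integral_neg, hFTC]
    ring
  exact ⟨hmain, hmain ▸ gammaPdf_nonneg hk hl t ht.le⟩
end

section
/- For every x > 0, the digamma function ψ satisfies -1/(2x) - 1/x² < ψ(x) - log(x) < -1/(2x). -/
open MeasureTheory Real Filter Set Topology

lemma hasDerivAt_logGamma {x : ℝ} (hx : 0 < x) :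
    HasDerivAt (fun y => Real.log (Real.Gamma y)) (digamma x) x := by
  have hd := (Real.differentiableAt_Gamma (fun m => by
    have : (0:ℝ) ≤ m := by positivity
    intro h; rw [h] at hx; linarith : ∀ m : ℕ, x ≠ -m)).hasDerivAt
  exact hd.log (Real.Gamma_pos_of_pos hx).ne'

lemma digamma_add_one {x : ℝ} (hx : 0 < x) :
    digamma (x + 1) = digamma x + 1 / x := by
  have hd := (Real.differentiableAt_Gamma (fun m => by
    have : (0:ℝ) ≤ m := by positivity
    intro h; rw [h] at hx; linarith : ∀ m : ℕ, x ≠ -m)).hasDerivAt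
  have hd1 := (Real.differentiableAt_Gamma (s := x + 1) (fun m => by
    have : (0:ℝ) ≤ m := by positivity
    intro h; nlinarith [h])).hasDerivAt
  have h1 : HasDerivAt (fun y => Real.Gamma (y + 1)) (deriv Real.Gamma (x + 1)) x := by
    simpa [Function.comp_def] using hd1.comp x ((hasDerivAt_id x).add_const 1)
  have h2 : HasDerivAt (fun y => y * Real.Gamma y) (deriv Real.Gamma (x + 1)) x := by
    apply h1.congr_of_eventuallyEq
    filter_upwards [eventually_gt_nhds hx] with y hy
    rw [Real.Gamma_add_one hy.ne']
  have h3 : HasDerivAt (fun y => y * Real.Gamma y)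
      (1 * Real.Gamma x + x * deriv Real.Gamma x) x := (hasDerivAt_id x).mul hd
  have key : deriv Real.Gamma (x + 1) = Real.Gamma x + x * deriv Real.Gamma x := by
    have := h2.unique h3; linarith
  have hG : Real.Gamma x ≠ 0 := (Real.Gamma_pos_of_pos hx).ne'
  rw [digamma, digamma, key, Real.Gamma_add_one hx.ne']
  field_simp
  ring

lemma logGamma_slope {x : ℝ} (hx : 0 < x) :
    slope (Real.log ∘ Real.Gamma) x (x + 1) = Real.log x := by
  rw [slope_def_field]
  simp only [Function.comp_apply]
  rw [Real.Gamma_add_one hx.ne', Real.log_mul hx.ne' (Real.Gamma_pos_of_pos hx).ne']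
  field_simp
  ring

lemma digamma_crude {x : ℝ} (hx : 0 < x) :
    Real.log x - 1 / x ≤ digamma x ∧ digamma x ≤ Real.log x := by
  have hc := Real.convexOn_log_Gamma
  have hx1 : (0:ℝ) < x + 1 := by linarith
  have hmem : x ∈ Ioi (0:ℝ) := hx
  have hmem1 : x + 1 ∈ Ioi (0:ℝ) := hx1
  have hlt : x < x + 1 := by linarith
  have h1 : digamma x ≤ slope (Real.log ∘ Real.Gamma) x (x + 1) :=
    hc.le_slope_of_hasDerivAt hmem hmem1 hlt ((hasDerivAt_logGamma hx))
  have h2 : slope (Real.log ∘ Real.Gamma) x (x + 1) ≤ digamma (x + 1) :=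
    hc.slope_le_of_hasDerivAt hmem hmem1 hlt ((hasDerivAt_logGamma hx1))
  rw [logGamma_slope hx] at h1 h2
  rw [digamma_add_one hx] at h2
  constructor <;> linarith

noncomputable def trap (x : ℝ) : ℝ :=
  1 / (2 * x) + 1 / (2 * (x + 1)) - (Real.log (x + 1) - Real.log x)

lemma trap_hasDeriv {x : ℝ} (hx : 0 < x) :
    HasDerivAt trap (-(1 / (2 * x ^ 2 * (x + 1) ^ 2))) x := by
  have hx1 : (0:ℝ) < x + 1 := by linarith
  have h1 : HasDerivAt (fun y : ℝ => 1 / (2 * y)) ((0 * (2 * x) - 1 * (2 * 1)) / (2 * x) ^ 2) x :=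
    (hasDerivAt_const x 1).div ((hasDerivAt_id x).const_mul 2) (by positivity)
  have h2 : HasDerivAt (fun y : ℝ => 1 / (2 * (y + 1)))
      ((0 * (2 * (x + 1)) - 1 * (2 * 1)) / (2 * (x + 1)) ^ 2) x :=
    (hasDerivAt_const x 1).div (((hasDerivAt_id x).add_const 1).const_mul 2) (by positivity)
  have h3 : HasDerivAt (fun y : ℝ => Real.log (y + 1)) (1 / (x + 1)) x := by
    simpa [Function.comp_def] using (Real.hasDerivAt_log hx1.ne').comp x ((hasDerivAt_id x).add_const 1)
  have h4 : HasDerivAt Real.log (1 / x) x := by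
    simpa using Real.hasDerivAt_log hx.ne'
  have := ((h1.add h2).sub (h3.sub h4))
  refine this.congr_deriv ?_
  field_simp
  ring

lemma trap_tendsto : Tendsto trap atTop (𝓝 0) := by
  have h1 : Tendsto (fun x : ℝ => 1 / (2 * x)) atTop (𝓝 0) := by
    simp only [one_div]
    exact tendsto_inv_atTop_zero.comp (tendsto_id.const_mul_atTop two_pos)
  have h2 : Tendsto (fun x : ℝ => 1 / (2 * (x + 1))) atTop (𝓝 0) := by
    simp only [one_div]
    exact tendsto_inv_atTop_zero.comp
      ((tendsto_atTop_add_const_right _ 1 tendsto_id).const_mul_atTop two_pos)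
  have h3 : Tendsto (fun x : ℝ => Real.log (x + 1) - Real.log x) atTop (𝓝 0) := by
    have hc : Tendsto (fun x : ℝ => 1 + 1 / x) atTop (𝓝 1) := by
      simpa using (tendsto_const_nhds (x := (1:ℝ))).add tendsto_inv_atTop_zero
    have hlog : Tendsto (fun x : ℝ => Real.log (1 + 1 / x)) atTop (𝓝 0) := by
      have := ((Real.continuousAt_log one_ne_zero).tendsto).comp hc
      simpa [Function.comp_def] using this
    apply hlog.congr'
    filter_upwards [eventually_gt_atTop (0:ℝ)] with y hy
    rw [← Real.log_div (by positivity) hy.ne']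
    congr 1
    field_simp
  have := (h1.add h2).sub h3
  unfold trap
  convert this using 2 with y
  simp [one_div]

lemma trap_anti : StrictAntiOn trap (Ioi 0) := by
  apply strictAntiOn_of_deriv_neg (convex_Ioi 0)
  · exact fun y hy => ((trap_hasDeriv hy).differentiableAt.continuousAt).continuousWithinAt
  · intro y hy
    rw [interior_Ioi] at hy
    rw [(trap_hasDeriv hy).deriv]
    have : (0:ℝ) < 1 / (2 * y ^ 2 * (y + 1) ^ 2) := by
      have : (0:ℝ) < y := hy
      positivity
    linarith

lemma trap_nonneg {x : ℝ} (hx : 0 < x) : 0 ≤ trap x := by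
  apply le_of_tendsto trap_tendsto
  filter_upwards [eventually_ge_atTop x] with y hy
  rcases eq_or_lt_of_le hy with rfl | hlt
  · exact le_refl _
  · exact (trap_anti hx (by exact lt_trans hx hlt) hlt).le

lemma trap_pos {x : ℝ} (hx : 0 < x) : 0 < trap x :=
  lt_of_le_of_lt (trap_nonneg (by linarith : (0:ℝ) < x + 1))
    (trap_anti hx (by simp; linarith) (by linarith))

noncomputable def trapG (x : ℝ) : ℝ := 1/12 * (1 / x ^ 2 - 1 / (x + 1) ^ 2) - trap x

lemma trapG_hasDeriv {x : ℝ} (hx : 0 < x) :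
    HasDerivAt trapG (-(1 / (6 * x ^ 3 * (x + 1) ^ 3))) x := by
  have hx1 : (0:ℝ) < x + 1 := by linarith
  have h1 : HasDerivAt (fun y : ℝ => 1 / y ^ 2) ((0 * x ^ 2 - 1 * (2 * x)) / (x ^ 2) ^ 2) x := by
    apply (hasDerivAt_const x 1).div _ (by positivity)
    simpa using (hasDerivAt_pow 2 x)
  have h2 : HasDerivAt (fun y : ℝ => 1 / (y + 1) ^ 2)
      ((0 * (x + 1) ^ 2 - 1 * (2 * (x + 1))) / ((x + 1) ^ 2) ^ 2) x := by
    apply (hasDerivAt_const x 1).div _ (by positivity)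
    have := (hasDerivAt_pow 2 (x + 1)).comp x ((hasDerivAt_id x).add_const 1)
    simpa [Function.comp_def] using this
  have := (((h1.sub h2).const_mul (1/12 : ℝ)).sub (trap_hasDeriv hx))
  refine this.congr_deriv ?_
  field_simp
  ring

lemma trapG_nonneg {x : ℝ} (hx : 0 < x) : 0 ≤ trapG x := by
  have anti : StrictAntiOn trapG (Ioi 0) := by
    apply strictAntiOn_of_deriv_neg (convex_Ioi 0)
    · exact fun y hy => ((trapG_hasDeriv hy).differentiableAt.continuousAt).continuousWithinAt
    · intro y hy
      rw [interior_Ioi] at hy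
      rw [(trapG_hasDeriv hy).deriv]
      have : (0:ℝ) < 1 / (6 * y ^ 3 * (y + 1) ^ 3) := by
        have : (0:ℝ) < y := hy
        positivity
      linarith
  have ht : Tendsto trapG atTop (𝓝 0) := by
    have h1 : Tendsto (fun y : ℝ => 1 / y ^ 2) atTop (𝓝 0) := by
      simp only [one_div]
      exact tendsto_inv_atTop_zero.comp (tendsto_pow_atTop (by norm_num))
    have h2 : Tendsto (fun y : ℝ => 1 / (y + 1) ^ 2) atTop (𝓝 0) := by
      simp only [one_div]
      exact tendsto_inv_atTop_zero.comp
        ((tendsto_pow_atTop (by norm_num)).comp (tendsto_atTop_add_const_right _ 1 tendsto_id))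
    have := ((h1.sub h2).const_mul (1/12 : ℝ)).sub trap_tendsto
    unfold trapG
    convert this using 2 with y
    simp [one_div]
  apply le_of_tendsto ht
  filter_upwards [eventually_ge_atTop x] with y hy
  rcases eq_or_lt_of_le hy with rfl | hlt
  · exact le_refl _
  · exact (anti hx (lt_trans hx hlt) hlt).le

noncomputable def gfun (x : ℝ) : ℝ := digamma x - Real.log x + 1 / (2 * x)

lemma gfun_step {x : ℝ} (hx : 0 < x) : gfun (x + 1) = gfun x + trap x := by
  unfold gfun trap
  rw [digamma_add_one hx]
  ring

lemma gfun_abs {x : ℝ} (hx : 0 < x) : |gfun x| ≤ 1 / (2 * x) := by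
  obtain ⟨h1, h2⟩ := digamma_crude hx
  rw [abs_le]
  unfold gfun
  have h3 : 1 / x = 2 * (1 / (2 * x)) := by field_simp
  rw [h3] at h1
  exact ⟨by linarith, by linarith⟩

lemma gfun_sum (x : ℝ) (hx : 0 < x) (n : ℕ) :
    gfun (x + n) = gfun x + ∑ k ∈ Finset.range n, trap (x + k) := by
  induction n with
  | zero => simp
  | succ n ih =>
    rw [Finset.sum_range_succ, ← add_assoc, ← ih]
    have hxn : 0 < x + n := by positivity
    have := gfun_step hxn
    push_cast
    rw [← this]
    ring_nf

theorem digamma_log_bounds (x : ℝ) (hx : 0 < x) :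
    -1 / (2 * x) - 1 / x ^ 2 < digamma x - Real.log x ∧
    digamma x - Real.log x < -1 / (2 * x) := by
  -- limit of gfun (x + n)
  have hlim : Tendsto (fun n : ℕ => gfun (x + n)) atTop (𝓝 0) := by
    apply squeeze_zero_norm (a := fun n : ℕ => 1 / (2 * (x + n)))
      (fun n => gfun_abs (by have := (Nat.cast_nonneg n : (0:ℝ) ≤ (n:ℝ)); linarith))
    have hb : Tendsto (fun n : ℕ => 2 * (x + (n:ℝ))) atTop atTop := by
      apply Tendsto.const_mul_atTop two_pos
      exact tendsto_atTop_add_const_left _ x tendsto_natCast_atTop_atTop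
    have := tendsto_inv_atTop_zero.comp hb
    apply this.congr
    intro n
    simp [Function.comp, one_div, mul_inv]
  have hsum : Tendsto (fun n : ℕ => ∑ k ∈ Finset.range n, trap (x + k)) atTop (𝓝 (-gfun x)) := by
    have : (fun n : ℕ => ∑ k ∈ Finset.range n, trap (x + k))
        = fun n : ℕ => gfun (x + n) - gfun x := by
      funext n
      rw [gfun_sum x hx n]; ring
    rw [this]
    simpa using hlim.sub_const (gfun x)
  -- upper bound for partial sums
  have hub : ∀ n : ℕ, ∑ k ∈ Finset.range n, trap (x + k) ≤ 1/12 * (1 / x ^ 2) := by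
    intro n
    have h1 : ∑ k ∈ Finset.range n, trap (x + k)
        ≤ ∑ k ∈ Finset.range n,
          (1/12 * (1 / (x + k) ^ 2) - 1/12 * (1 / (x + (k+1):ℝ) ^ 2)) := by
      apply Finset.sum_le_sum
      intro k _
      have hk : (0:ℝ) < x + k := by positivity
      have := trapG_nonneg hk
      unfold trapG at this
      have he : (x + (k+1):ℝ) = (x + k) + 1 := by ring
      rw [he]
      linarith
    have h2 : ∑ k ∈ Finset.range n,
        (1/12 * (1 / (x + k) ^ 2) - 1/12 * (1 / (x + (k+1):ℝ) ^ 2))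
        = 1/12 * (1 / x ^ 2) - 1/12 * (1 / (x + n) ^ 2) := by
      have := Finset.sum_range_sub' (f := fun k : ℕ => 1/12 * (1 / (x + k) ^ 2)) n
      simp only [Nat.cast_zero, add_zero] at this
      rw [← this]
      apply Finset.sum_congr rfl
      intro k _
      push_cast
      ring_nf
    refine (h1.trans_eq h2).trans ?_
    have hn : (0:ℝ) ≤ 1/12 * (1 / (x + n) ^ 2) := by positivity
    linarith
  -- conclude
  have hg_upper : -gfun x ≤ 1/12 * (1 / x ^ 2) := le_of_tendsto hsum (Eventually.of_forall hub)
  have hg_lower : trap x ≤ -gfun x := by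
    apply ge_of_tendsto hsum
    filter_upwards [eventually_ge_atTop 1] with n hn
    have h0 : (0:ℕ) ∈ Finset.range n := Finset.mem_range.mpr hn
    have := Finset.single_le_sum (f := fun k : ℕ => trap (x + k))
      (fun k _ => (trap_pos (by have := (Nat.cast_nonneg k : (0:ℝ) ≤ k); linarith)).le) h0
    simpa using this
  have htp := trap_pos hx
  have hx2 : (0:ℝ) < 1 / x ^ 2 := by positivity
  constructor
  · have : gfun x ≥ -(1/12 * (1 / x ^ 2)) := by linarith
    unfold gfun at this
    have h112 : 1/12 * (1 / x ^ 2) < 1 / x ^ 2 := by linarith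
    have hdiv : -1 / (2 * x) = -(1 / (2 * x)) := by ring
    rw [hdiv]
    linarith
  · have : gfun x < 0 := by linarith
    unfold gfun at this
    have hdiv : -1 / (2 * x) = -(1 / (2 * x)) := by ring
    rw [hdiv]
    linarith
end

section
/- Define h(x) = log(x) - ψ(x) for x > 0, where ψ is the digamma function. Then for all x > 0, 1/(2x) < h(x) < 1/(2x) + 1/x². -/
open MeasureTheory Real Filter Set Topology

private lemma aux_log_lt {t : ℝ} (ht : 0 < t) : t - t^2/2 < Real.log (1+t) := by
  have key : StrictMonoOn (fun t : ℝ => Real.log (1+t) - t + t^2/2) (Ici 0) := by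
    apply strictMonoOn_of_deriv_pos (convex_Ici 0)
    · fun_prop (disch := intro x hx; simp at hx ⊢; linarith)
    · intro s hs
      rw [interior_Ici] at hs
      have hs0 := mem_Ioi.mp hs
      have h1 : (0:ℝ) < 1 + s := by linarith
      have hd : HasDerivAt (fun t : ℝ => Real.log (1+t) - t + t^2/2)
          (1/(1+s) - 1 + s) s := by
        have := ((hasDerivAt_id s).const_add 1).log h1.ne'
        exact ((this.sub (hasDerivAt_id s)).add ((hasDerivAt_pow 2 s).div_const 2)).congr_deriv (by simp)
      rw [hd.deriv]
      have : 1/(1+s) - 1 + s = s^2/(1+s) := by field_simp; ring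
      rw [this]; positivity
  have := key (self_mem_Ici) (mem_Ici.mpr ht.le) ht
  simp only [Real.log_one] at this
  simp at this; linarith

private lemma aux_lt_log {t : ℝ} (ht : 0 < t) : Real.log (1+t) < t - t^2/(2*(1+t)) := by
  have key : StrictMonoOn (fun t : ℝ => t - t^2/(2*(1+t)) - Real.log (1+t)) (Ici 0) := by
    apply strictMonoOn_of_deriv_pos (convex_Ici 0)
    · have : ContinuousOn (fun t : ℝ => t - t^2/(2*(1+t)) - Real.log (1+t)) (Ici 0) := by
        apply ContinuousOn.sub
        apply ContinuousOn.sub continuousOn_id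
        · exact (continuousOn_pow 2).div (by fun_prop) (fun x hx => by simp at hx; positivity)
        · exact ContinuousOn.log (by fun_prop) (fun x hx => by simp at hx; positivity)
      exact this
    · intro s hs
      rw [interior_Ici] at hs
      have hs0 := mem_Ioi.mp hs
      have h1 : (0:ℝ) < 1 + s := by linarith
      have h2 : (0:ℝ) < 2*(1+s) := by linarith
      have hd : HasDerivAt (fun t : ℝ => t - t^2/(2*(1+t)) - Real.log (1+t))
          (1 - (2*s*(2*(1+s)) - s^2*2)/(2*(1+s))^2 - 1/(1+s)) s := by
        have hlog := ((hasDerivAt_id s).const_add 1).log h1.ne'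
        have hden : HasDerivAt (fun t : ℝ => 2*(1+t)) 2 s := by
          simpa using ((hasDerivAt_id s).const_add 1).const_mul 2
        have hq := (hasDerivAt_pow 2 s).div hden h2.ne'
        exact (((hasDerivAt_id s).sub hq).sub hlog).congr_deriv (by simp)
      rw [hd.deriv]
      have : 1 - (2*s*(2*(1+s)) - s^2*2)/(2*(1+s))^2 - 1/(1+s) = s^2/(2*(1+s)^2) := by
        field_simp; ring
      rw [this]; positivity
  have := key (self_mem_Ici) (mem_Ici.mpr ht.le) ht
  simp only [Real.log_one] at this
  simp at this; linarith


private lemma dGamma' {x : ℝ} (hx : 0 < x) : DifferentiableAt ℝ Real.Gamma x :=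
  Real.differentiableAt_Gamma fun m => by
    have : (0:ℝ) ≤ m := m.cast_nonneg
    intro h; rw [h] at hx; linarith

private lemma dF' {x : ℝ} (hx : 0 < x) :
    DifferentiableAt ℝ (Real.log ∘ Real.Gamma) x :=
  (dGamma' hx).log (Real.Gamma_pos_of_pos hx).ne'

private lemma derivF_eq {x : ℝ} (hx : 0 < x) :
    deriv (Real.log ∘ Real.Gamma) x = deriv Real.Gamma x / Real.Gamma x := by
  rw [Function.comp_def, deriv.log (dGamma' hx) (Real.Gamma_pos_of_pos hx).ne']

private lemma F_rec {x : ℝ} (hx : 0 < x) :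
    (Real.log ∘ Real.Gamma) (x + 1) = (Real.log ∘ Real.Gamma) x + Real.log x := by
  simp only [Function.comp_apply, Real.Gamma_add_one hx.ne',
    Real.log_mul hx.ne' (Real.Gamma_pos_of_pos hx).ne', add_comm]

private lemma psi_rec {x : ℝ} (hx : 0 < x) :
    deriv (Real.log ∘ Real.Gamma) (x + 1) = deriv (Real.log ∘ Real.Gamma) x + 1 / x := by
  rw [← deriv_comp_add_const, one_div, ← deriv_log,
    ← deriv_add (dF' hx) (differentiableAt_log hx.ne')]
  apply Filter.EventuallyEq.deriv_eq
  filter_upwards [eventually_gt_nhds hx] with y hy using F_rec hy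

private lemma psi_le_log {y : ℝ} (hy : 0 < y) :
    deriv (Real.log ∘ Real.Gamma) y ≤ Real.log y := by
  have h := Real.convexOn_log_Gamma.deriv_le_slope (mem_Ioi.mpr hy)
    (mem_Ioi.mpr (by linarith : (0:ℝ) < y + 1)) (by linarith) (dF' hy)
  rwa [slope_def_field, F_rec hy, add_sub_cancel_left, add_sub_cancel_left, div_one] at h

private lemma log_le_psi {y : ℝ} (hy : 0 < y) :
    Real.log y ≤ deriv (Real.log ∘ Real.Gamma) (y + 1) := by
  have h := Real.convexOn_log_Gamma.slope_le_deriv (mem_Ioi.mpr hy)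
    (mem_Ioi.mpr (by linarith : (0:ℝ) < y + 1)) (by linarith) (dF' (by linarith))
  rwa [slope_def_field, F_rec hy, add_sub_cancel_left, add_sub_cancel_left, div_one] at h

private noncomputable def hfun (y : ℝ) : ℝ := Real.log y - deriv (Real.log ∘ Real.Gamma) y

private lemma hfun_step {y : ℝ} (hy : 0 < y) :
    hfun y = (1/y - Real.log (1 + 1/y)) + hfun (y + 1) := by
  have hlog : Real.log (1 + 1/y) = Real.log (y+1) - Real.log y := by
    rw [show (1 : ℝ) + 1/y = (y+1)/y by field_simp, Real.log_div (by linarith) hy.ne']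
  simp only [hfun, psi_rec hy, hlog]; ring

private lemma fl {y : ℝ} (hy : 0 < y) : 1/(2*y) - 1/(2*(y+1)) < 1/y - Real.log (1 + 1/y) := by
  have h := aux_lt_log (t := 1/y) (by positivity)
  have e1 : (1/y)^2/(2*(1+1/y)) = 1/(2*y) - 1/(2*(y+1)) := by field_simp; ring
  linarith [h, e1 ▸ h]

private lemma fu {y : ℝ} (hy : 0 < y) : 1/y - Real.log (1 + 1/y) < 1/(2*y^2) := by
  have h := aux_log_lt (t := 1/y) (by positivity)
  have e1 : (1/y)^2/2 = 1/(2*y^2) := by field_simp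
  linarith [e1 ▸ h]

private lemma hfun_nonneg {y : ℝ} (hy : 0 < y) : 0 ≤ hfun y :=
  sub_nonneg.mpr (psi_le_log hy)

private lemma hfun_small {z : ℝ} (hz : 0 < z) : hfun (z + 1) ≤ 1/z := by
  have h1 : Real.log z ≤ deriv (Real.log ∘ Real.Gamma) (z+1) := log_le_psi hz
  have h2 : Real.log (z+1) - Real.log z ≤ 1/z := by
    rw [← Real.log_div (by linarith) hz.ne']
    have := Real.log_le_sub_one_of_pos (x := (z+1)/z) (by positivity)
    have e : (z+1)/z - 1 = 1/z := by field_simp; ring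
    linarith [e ▸ this]
  simp only [hfun]; linarith

private lemma lowerInd (n : ℕ) : ∀ y : ℝ, 0 < y →
    hfun (y + n) + 1/(2*y) - 1/(2*(y+n)) ≤ hfun y := by
  induction n with
  | zero => intro y hy; simp
  | succ n ih =>
    intro y hy
    have h1 := ih (y+1) (by linarith)
    have h2 := hfun_step hy
    have h3 := fl hy
    have e : (y+1) + (n:ℝ) = y + (n+1:ℕ) := by push_cast; ring
    rw [e] at h1
    have e2 : 1/(2*((y+1)+(n:ℝ))) = 1/(2*(y+((n:ℕ):ℝ)+1)) := by norm_num; ring_nf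
    push_cast at h1 ⊢
    linarith

private lemma upperInd (n : ℕ) : ∀ y : ℝ, 0 < y →
    hfun y ≤ hfun (y + n) + (1/(2*y) + 1/(2*y^2)) - (1/(2*(y+n)) + 1/(2*(y+n)^2)) := by
  induction n with
  | zero => intro y hy; simp
  | succ n ih =>
    intro y hy
    have h1 := ih (y+1) (by linarith)
    have h2 := hfun_step hy
    have h3 := fu hy
    have htel : 1/(2*y^2) ≤ (1/(2*y) + 1/(2*y^2)) - (1/(2*(y+1)) + 1/(2*(y+1)^2)) := by
      have e : ((1/(2*y) + 1/(2*y^2)) - (1/(2*(y+1)) + 1/(2*(y+1)^2))) - 1/(2*y^2)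
          = y/(2*y^2*(y+1)^2) := by field_simp; ring
      have pos : (0:ℝ) ≤ y/(2*y^2*(y+1)^2) := by positivity
      linarith [e, pos]
    have e : (y+1) + (n:ℝ) = y + (n+1:ℕ) := by push_cast; ring
    rw [e] at h1
    push_cast at h1 ⊢
    linarith

private lemma lower_lim {y : ℝ} (hy : 0 < y) : 1/(2*y) ≤ hfun y := by
  have htend : Tendsto (fun n : ℕ => 1/(2*y) - 1/(2*(y+n))) atTop (𝓝 (1/(2*y))) := by
    have h1 : Tendsto (fun n : ℕ => 2*(y+(n:ℝ))) atTop atTop := by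
      apply Tendsto.const_mul_atTop two_pos
      exact tendsto_atTop_add_const_left _ y tendsto_natCast_atTop_atTop
    have h2 := h1.inv_tendsto_atTop
    have h2' : Tendsto (fun n : ℕ => 1/(2*(y+(n:ℝ)))) atTop (𝓝 0) :=
      h2.congr fun n => by simp [one_div]
    have := (tendsto_const_nhds (x := 1/(2*y)) (f := atTop)).sub h2'
    rwa [sub_zero] at this
  refine le_of_tendsto htend (Eventually.of_forall fun n => ?_)
  have := lowerInd n y hy
  have := hfun_nonneg (y := y + n) (by positivity)
  linarith

private lemma upper_lim {y : ℝ} (hy : 0 < y) : hfun y ≤ 1/(2*y) + 1/(2*y^2) := by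
  have htend : Tendsto (fun n : ℕ => (1/(2*y) + 1/(2*y^2)) + 1/(y+n)) atTop
      (𝓝 (1/(2*y) + 1/(2*y^2))) := by
    have h1 : Tendsto (fun n : ℕ => y+(n:ℝ)) atTop atTop :=
      tendsto_atTop_add_const_left _ y tendsto_natCast_atTop_atTop
    have h2 := h1.inv_tendsto_atTop
    have h2' : Tendsto (fun n : ℕ => 1/(y+(n:ℝ))) atTop (𝓝 0) :=
      h2.congr fun n => by simp [one_div]
    have := (tendsto_const_nhds (x := 1/(2*y) + 1/(2*y^2)) (f := atTop)).add h2'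
    rwa [add_zero] at this
  refine ge_of_tendsto htend (Eventually.of_forall fun n => ?_)
  have h1 := upperInd (n+1) y hy
  have h2 : hfun (y + (n+1:ℕ)) ≤ 1/(y+n) := by
    have := hfun_small (z := y + n) (by positivity)
    have e : (y + (n:ℝ)) + 1 = y + ((n+1:ℕ):ℝ) := by push_cast; ring
    rwa [e] at this
  have h3 : (0:ℝ) < 1/(2*(y+(n+1:ℕ))) + 1/(2*(y+(n+1:ℕ))^2) := by positivity
  linarith

theorem log_sub_digamma_bounds (x : ℝ) (hx : 0 < x) :
    1 / (2 * x) < Real.log x - digamma x ∧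
    Real.log x - digamma x < 1 / (2 * x) + 1 / x ^ 2 := by
  have hdig : Real.log x - digamma x = hfun x := by
    rw [hfun, derivF_eq hx, digamma]
  rw [hdig]
  constructor
  · have h1 := hfun_step hx
    have h2 := fl hx
    have h3 := lower_lim (y := x+1) (by linarith)
    linarith
  · have h1 := upper_lim hx
    have : 1/(2*x^2) < 1/x^2 := by
      rw [div_lt_div_iff₀ (by positivity) (by positivity)]; nlinarith
    linarith
end
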